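/- Let V₁, V₂, V₃ be finite nonempty sets and f₁₂ : V₁ × V₂ → ℝ, f₁₃ : V₁ × V₃ → ℝ, f₂₃ : V₂ × V₃ → ℝ, with f₁₂ and f₁₃ taking only nonnegative values. Then E_{x₁,x₂,x₃} f₁₂(x₁,x₂) f₁₃(x₁,x₃) f₂₃(x₂,x₃) ≤ ‖f₁₂‖_∞ · ‖f₁₃‖_∞ · ‖f₂₃‖_□. -/

import Mathlib

open Finset

/-- The cut norm of `f : V × W → ℝ` (with respect to uniform measures). -/
noncomputable def cutNorm {V W : Type*} [Fintype V] [Fintype W] (f : V → W → ℝ) : ℝ :=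
  ⨆ p : {a : V → ℝ // ∀ x, a x ∈ Set.Icc (0 : ℝ) 1} ×
      {b : W → ℝ // ∀ y, b y ∈ Set.Icc (0 : ℝ) 1},
    |(∑ x, ∑ y, f x y * p.1.1 x * p.2.1 y) / ((Fintype.card V : ℝ) * (Fintype.card W : ℝ))|

/-- The sup norm of `f : V × W → ℝ`. -/
noncomputable def supNorm {V W : Type*} [Fintype V] [Fintype W] (f : V → W → ℝ) : ℝ :=
  ⨆ p : V × W, |f p.1 p.2|

lemma abs_le_supNorm {V W : Type*} [Fintype V] [Fintype W] [Nonempty V] [Nonempty W]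
    (f : V → W → ℝ) (x : V) (y : W) : |f x y| ≤ supNorm f := by
  unfold supNorm
  exact le_ciSup (Set.Finite.bddAbove (Set.finite_range fun p : V × W => |f p.1 p.2|)) (x, y)

lemma supNorm_nonneg {V W : Type*} [Fintype V] [Fintype W] [Nonempty V] [Nonempty W]
    (f : V → W → ℝ) : 0 ≤ supNorm f :=
  le_trans (abs_nonneg _) (abs_le_supNorm f Classical.ofNonempty Classical.ofNonempty)

lemma cutNorm_bddAbove {V W : Type*} [Fintype V] [Fintype W] [Nonempty V] [Nonempty W]
    (f : V → W → ℝ) :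
    BddAbove (Set.range fun p : {a : V → ℝ // ∀ x, a x ∈ Set.Icc (0 : ℝ) 1} ×
      {b : W → ℝ // ∀ y, b y ∈ Set.Icc (0 : ℝ) 1} =>
    |(∑ x, ∑ y, f x y * p.1.1 x * p.2.1 y) /
      ((Fintype.card V : ℝ) * (Fintype.card W : ℝ))|) := by
  have hD : (0 : ℝ) < (Fintype.card V : ℝ) * (Fintype.card W : ℝ) := by positivity
  refine ⟨(∑ x, ∑ y, |f x y|) / ((Fintype.card V : ℝ) * (Fintype.card W : ℝ)), ?_⟩
  rintro r ⟨⟨a, b⟩, rfl⟩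
  dsimp only
  rw [abs_div, abs_of_pos hD]
  gcongr
  calc |∑ x, ∑ y, f x y * a.1 x * b.1 y| ≤ ∑ x, |∑ y, f x y * a.1 x * b.1 y| :=
      Finset.abs_sum_le_sum_abs _ _
  _ ≤ ∑ x, ∑ y, |f x y * a.1 x * b.1 y| :=
      Finset.sum_le_sum fun x _ => Finset.abs_sum_le_sum_abs _ _
  _ ≤ ∑ x, ∑ y, |f x y| := by
      refine Finset.sum_le_sum fun x _ => Finset.sum_le_sum fun y _ => ?_
      rw [abs_mul, abs_mul]
      have ha := a.2 x; have hb := b.2 y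
      calc |f x y| * |a.1 x| * |b.1 y| ≤ |f x y| * 1 * 1 := by
            have ha1 : |a.1 x| ≤ 1 := by rw [abs_of_nonneg ha.1]; exact ha.2
            have hb1 : |b.1 y| ≤ 1 := by rw [abs_of_nonneg hb.1]; exact hb.2
            exact mul_le_mul (mul_le_mul le_rfl ha1 (abs_nonneg _) (abs_nonneg _)) hb1
              (abs_nonneg _) (by positivity)
      _ = |f x y| := by ring

lemma le_cutNorm {V W : Type*} [Fintype V] [Fintype W] [Nonempty V] [Nonempty W]
    (f : V → W → ℝ) (a : V → ℝ) (b : W → ℝ)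
    (ha : ∀ x, a x ∈ Set.Icc (0 : ℝ) 1) (hb : ∀ y, b y ∈ Set.Icc (0 : ℝ) 1) :
    |(∑ x, ∑ y, f x y * a x * b y) / ((Fintype.card V : ℝ) * (Fintype.card W : ℝ))|
      ≤ cutNorm f :=
  le_ciSup (cutNorm_bddAbove f) (⟨a, ha⟩, ⟨b, hb⟩)

lemma cutNorm_nonneg {V W : Type*} [Fintype V] [Fintype W] [Nonempty V] [Nonempty W]
    (f : V → W → ℝ) : 0 ≤ cutNorm f :=
  le_trans (abs_nonneg _) (le_cutNorm f (fun _ => 0) (fun _ => 0)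
    (fun _ => ⟨le_rfl, zero_le_one⟩) (fun _ => ⟨le_rfl, zero_le_one⟩))

/-- **Triangle counting lemma for dense graphs.** -/
theorem dense_triangle_counting {V₁ V₂ V₃ : Type*} [Fintype V₁] [Fintype V₂] [Fintype V₃]
    [Nonempty V₁] [Nonempty V₂] [Nonempty V₃]
    (f₁₂ : V₁ → V₂ → ℝ) (f₁₃ : V₁ → V₃ → ℝ) (f₂₃ : V₂ → V₃ → ℝ)
    (h₁₂ : ∀ x y, 0 ≤ f₁₂ x y) (h₁₃ : ∀ x y, 0 ≤ f₁₃ x y) :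
    (∑ x₁, ∑ x₂, ∑ x₃, f₁₂ x₁ x₂ * f₁₃ x₁ x₃ * f₂₃ x₂ x₃) /
        ((Fintype.card V₁ : ℝ) * (Fintype.card V₂ : ℝ) * (Fintype.card V₃ : ℝ)) ≤
      supNorm f₁₂ * supNorm f₁₃ * cutNorm f₂₃ := by
  set M₁₂ := supNorm f₁₂ with hM12
  set M₁₃ := supNorm f₁₃ with hM13
  set C := cutNorm f₂₃ with hC
  have hM12n : 0 ≤ M₁₂ := supNorm_nonneg _
  have hM13n : 0 ≤ M₁₃ := supNorm_nonneg _
  have hCn : 0 ≤ C := cutNorm_nonneg _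
  have hn1 : (0:ℝ) < (Fintype.card V₁ : ℝ) := by positivity
  have hn2 : (0:ℝ) < (Fintype.card V₂ : ℝ) := by positivity
  have hn3 : (0:ℝ) < (Fintype.card V₃ : ℝ) := by positivity
  rcases eq_or_lt_of_le hM12n with h0 | hM12p
  · have hz : ∀ x y, f₁₂ x y = 0 := fun x y =>
      abs_eq_zero.mp (le_antisymm (le_of_le_of_eq (abs_le_supNorm f₁₂ x y) h0.symm) (abs_nonneg _))
    have : (∑ x₁, ∑ x₂, ∑ x₃, f₁₂ x₁ x₂ * f₁₃ x₁ x₃ * f₂₃ x₂ x₃) = 0 := by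
      simp [hz]
    rw [this, zero_div]
    positivity
  rcases eq_or_lt_of_le hM13n with h0 | hM13p
  · have hz : ∀ x y, f₁₃ x y = 0 := fun x y =>
      abs_eq_zero.mp (le_antisymm (le_of_le_of_eq (abs_le_supNorm f₁₃ x y) h0.symm) (abs_nonneg _))
    have : (∑ x₁, ∑ x₂, ∑ x₃, f₁₂ x₁ x₂ * f₁₃ x₁ x₃ * f₂₃ x₂ x₃) = 0 := by
      simp [hz]
    rw [this, zero_div]
    positivity
  rw [div_le_iff₀ (by positivity)]
  have key : ∀ x₁, (∑ x₂, ∑ x₃, f₁₂ x₁ x₂ * f₁₃ x₁ x₃ * f₂₃ x₂ x₃) ≤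
      M₁₂ * M₁₃ * C * ((Fintype.card V₂ : ℝ) * (Fintype.card V₃ : ℝ)) := by
    intro x₁
    set a : V₂ → ℝ := fun x₂ => f₁₂ x₁ x₂ / M₁₂ with ha
    set b : V₃ → ℝ := fun x₃ => f₁₃ x₁ x₃ / M₁₃ with hb
    have haI : ∀ x, a x ∈ Set.Icc (0:ℝ) 1 := fun x =>
      ⟨div_nonneg (h₁₂ _ _) hM12n, by
        rw [div_le_one hM12p]
        calc f₁₂ x₁ x ≤ |f₁₂ x₁ x| := le_abs_self _
        _ ≤ M₁₂ := abs_le_supNorm _ _ _⟩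
    have hbI : ∀ y, b y ∈ Set.Icc (0:ℝ) 1 := fun y =>
      ⟨div_nonneg (h₁₃ _ _) hM13n, by
        rw [div_le_one hM13p]
        calc f₁₃ x₁ y ≤ |f₁₃ x₁ y| := le_abs_self _
        _ ≤ M₁₃ := abs_le_supNorm _ _ _⟩
    have hEq : (∑ x₂, ∑ x₃, f₁₂ x₁ x₂ * f₁₃ x₁ x₃ * f₂₃ x₂ x₃) =
        M₁₂ * M₁₃ * (∑ x₂, ∑ x₃, f₂₃ x₂ x₃ * a x₂ * b x₃) := by
      rw [Finset.mul_sum]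
      refine Finset.sum_congr rfl fun x₂ _ => ?_
      rw [Finset.mul_sum]
      refine Finset.sum_congr rfl fun x₃ _ => ?_
      simp only [ha, hb]
      field_simp
    rw [hEq]
    have hle : (∑ x₂, ∑ x₃, f₂₃ x₂ x₃ * a x₂ * b x₃) ≤
        C * ((Fintype.card V₂ : ℝ) * (Fintype.card V₃ : ℝ)) := by
      have h1 := le_cutNorm f₂₃ a b haI hbI
      have h2 : (∑ x₂, ∑ x₃, f₂₃ x₂ x₃ * a x₂ * b x₃) /
          ((Fintype.card V₂ : ℝ) * (Fintype.card V₃ : ℝ)) ≤ C :=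
        le_trans (le_abs_self _) h1
      calc (∑ x₂, ∑ x₃, f₂₃ x₂ x₃ * a x₂ * b x₃) =
          (∑ x₂, ∑ x₃, f₂₃ x₂ x₃ * a x₂ * b x₃) /
            ((Fintype.card V₂ : ℝ) * (Fintype.card V₃ : ℝ)) *
            ((Fintype.card V₂ : ℝ) * (Fintype.card V₃ : ℝ)) := by
            field_simp
      _ ≤ C * ((Fintype.card V₂ : ℝ) * (Fintype.card V₃ : ℝ)) := by
            apply mul_le_mul_of_nonneg_right h2 (by positivity)
    calc M₁₂ * M₁₃ * (∑ x₂, ∑ x₃, f₂₃ x₂ x₃ * a x₂ * b x₃) ≤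
        M₁₂ * M₁₃ * (C * ((Fintype.card V₂ : ℝ) * (Fintype.card V₃ : ℝ))) :=
        mul_le_mul_of_nonneg_left hle (by positivity)
    _ = M₁₂ * M₁₃ * C * ((Fintype.card V₂ : ℝ) * (Fintype.card V₃ : ℝ)) := by ring
  calc (∑ x₁, ∑ x₂, ∑ x₃, f₁₂ x₁ x₂ * f₁₃ x₁ x₃ * f₂₃ x₂ x₃) ≤
      ∑ _x₁ : V₁, M₁₂ * M₁₃ * C * ((Fintype.card V₂ : ℝ) * (Fintype.card V₃ : ℝ)) :=
      Finset.sum_le_sum fun x₁ _ => key x₁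
  _ = M₁₂ * M₁₃ * C * ((Fintype.card V₁ : ℝ) * (Fintype.card V₂ : ℝ) * (Fintype.card V₃ : ℝ)) := by
      rw [Finset.sum_const, card_univ, nsmul_eq_mul]; ring
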